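/- For the one-dimensional hierarchical interpolant: if f : [0,1] → ℝ is C² with f(0) = f(1) = 0, and f_n = ∑_{l=1}^n ∑_{i odd} v_{l,i} φ_{l,i} is its hierarchical interpolant of level n, then ‖f - f_n‖_∞ ≤ ∑_{l > n} 2^{-1} 2^{-2l} ‖f''‖_∞ ≤ (1/6)·4^{-n}·‖f''‖_∞. -/

import Mathlib

noncomputable def hat (x : ℝ) : ℝ := max 0 (1 - |x|)

noncomputable def hatLI (l i : ℕ) (x : ℝ) : ℝ :=
  hat ((x - (i : ℝ) * (2 : ℝ) ^ (-(l : ℤ))) * (2 : ℝ) ^ (l : ℤ))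

/-- Hierarchical coefficient `v_{l,i} = f(x_{l,i}) - (f(x_{l,i}-h_l)+f(x_{l,i}+h_l))/2`. -/
noncomputable def hierCoeff (f : ℝ → ℝ) (l i : ℕ) : ℝ :=
  f ((i : ℝ) * (2 : ℝ) ^ (-(l : ℤ)))
    - (f ((i : ℝ) * (2 : ℝ) ^ (-(l : ℤ)) - (2 : ℝ) ^ (-(l : ℤ)))
        + f ((i : ℝ) * (2 : ℝ) ^ (-(l : ℤ)) + (2 : ℝ) ^ (-(l : ℤ)))) / 2



noncomputable def interp (f : ℝ → ℝ) (l : ℕ) (x : ℝ) : ℝ :=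
  f ((⌊x * 2 ^ l⌋ : ℝ) * (2:ℝ)^(-(l:ℤ)))
    + (x * 2 ^ l - ⌊x * 2 ^ l⌋)
      * (f (((⌊x * 2 ^ l⌋ : ℝ) + 1) * (2:ℝ)^(-(l:ℤ))) - f ((⌊x * 2 ^ l⌋ : ℝ) * (2:ℝ)^(-(l:ℤ))))

lemma hat_zero {t : ℝ} (ht : 1 ≤ |t|) : hat t = 0 := max_eq_left (by linarith)

lemma hat_val {t : ℝ} (ht : |t| ≤ 1) : hat t = 1 - |t| := max_eq_right (by linarith)

lemma interp_zero (f : ℝ → ℝ) (hf0 : f 0 = 0) (hf1 : f 1 = 0) (x : ℝ)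
    (hx0 : 0 ≤ x) (hx1 : x ≤ 1) : interp f 0 x = 0 := by
  rcases eq_or_lt_of_le hx1 with rfl | hx1
  · have : ⌊(1:ℝ) * 2 ^ 0⌋ = 1 := by norm_num
    simp [interp, this, hf1]
  · have h0 : ⌊x⌋ = 0 := by
      rw [Int.floor_eq_zero_iff]
      exact ⟨hx0, hx1⟩
    simp [interp, h0, hf0, hf1]

lemma interp_one (f : ℝ → ℝ) (l : ℕ) : interp f l 1 = f 1 := by
  have h1 : ⌊(1:ℝ) * 2 ^ l⌋ = (2^l : ℕ) := by
    rw [one_mul, show ((2:ℝ)^l) = (((2^l : ℤ)):ℝ) by push_cast; ring, Int.floor_intCast]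
    push_cast; ring
  have h2 : ((2^l : ℕ) : ℝ) * (2:ℝ)^(-(l:ℤ)) = 1 := by
    rw [zpow_neg, zpow_natCast]
    push_cast
    field_simp
  rw [interp, h1]
  push_cast at h2 ⊢
  rw [h2]
  simp

lemma step (f : ℝ → ℝ) (l : ℕ) (x : ℝ) (hx0 : 0 ≤ x) (hx1 : x ≤ 1) :
    interp f (l+1) x - interp f l x =
      ∑ i ∈ (Finset.Icc 1 (2 ^ (l+1) - 1)).filter (fun i => Odd i),
        hierCoeff f (l+1) i * hatLI (l+1) i x := by
  have hneg : (2:ℝ) ^ (-((l+1:ℕ):ℤ)) = (2:ℝ)^(-(l:ℤ)) / 2 := by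
    rw [show (-((l+1:ℕ):ℤ)) = -(l:ℤ) + (-1) by push_cast; ring, zpow_add₀ (two_ne_zero)]
    norm_num
    ring
  have hposz : (2:ℝ) ^ (((l+1:ℕ)):ℤ) = 2^(l:ℕ) * 2 := by
    rw [zpow_natCast]; ring
  have hprod : (2:ℝ)^(-(l:ℤ)) * 2^(l:ℕ) = 1 := by
    rw [zpow_neg, zpow_natCast]
    field_simp
  have hpl : (0:ℝ) < 2^l := by positivity
  -- argument of hatLI
  have harg : ∀ i : ℕ, (x - (i : ℝ) * (2 : ℝ) ^ (-((l+1:ℕ)) : ℤ)) * (2 : ℝ) ^ (((l+1:ℕ)) : ℤ)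
      = x * 2^l * 2 - i := by
    intro i
    rw [hneg, hposz]
    field_simp
    nlinarith [hprod]
  rcases eq_or_lt_of_le hx1 with rfl | hx1
  · rw [interp_one, interp_one, sub_self]
    symm
    apply Finset.sum_eq_zero
    intro i hi
    obtain ⟨hi1, _⟩ := Finset.mem_filter.mp hi
    obtain ⟨hia, hib⟩ := Finset.mem_Icc.mp hi1
    have hib' : (i:ℝ) ≤ 2^l * 2 - 1 := by
      have h1 : (1:ℕ) ≤ 2^(l+1) := Nat.one_le_two_pow
      have h3 : (i:ℕ) + 1 ≤ 2^(l+1) := by omega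
      have h4 : ((i:ℕ):ℝ) + 1 ≤ ((2^(l+1) : ℕ):ℝ) := by exact_mod_cast h3
      push_cast at h4
      linarith [show ((2:ℝ)^(l+1)) = 2^l*2 from by ring]
    have : hatLI (l+1) i 1 = 0 := by
      rw [hatLI, harg i]
      apply hat_zero
      rw [abs_of_nonneg (by linarith)]
      linarith
    rw [this, mul_zero]
  · -- x < 1
    set m : ℕ := ⌊x * 2^l⌋.toNat with hm
    have hfl : ⌊x * (2:ℝ)^l⌋ = (m:ℤ) := (Int.toNat_of_nonneg (Int.floor_nonneg.mpr (mul_nonneg hx0 (by positivity)))).symm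
    have hm1 : (m:ℝ) ≤ x*2^l := by
      have := Int.floor_le (x * (2:ℝ)^l)
      rw [hfl] at this
      exact_mod_cast this
    have hm2 : x*2^l < m+1 := by
      have := Int.lt_floor_add_one (x * (2:ℝ)^l)
      rw [hfl] at this
      exact_mod_cast this
    have hmp : m < 2^l := by
      have : (m:ℝ) < 2^l := lt_of_le_of_lt hm1 (by nlinarith)
      exact_mod_cast this
    have h2p : (2:ℕ)^(l+1) = 2*2^l := by ring
    have hmem : 2*m+1 ∈ (Finset.Icc 1 (2 ^ (l+1) - 1)).filter (fun i => Odd i) := by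
      refine Finset.mem_filter.mpr ⟨Finset.mem_Icc.mpr ⟨by omega, by omega⟩, ⟨m, by ring⟩⟩
    rw [Finset.sum_eq_single_of_mem (2*m+1) hmem ?other]
    case other =>
      intro i hi hne
      obtain ⟨hi1, hodd⟩ := Finset.mem_filter.mp hi
      obtain ⟨k, hk⟩ := hodd
      have hk' : i = 2*k+1 := by omega
      have hkm : k < m ∨ m < k := by omega
      have hz : hatLI (l+1) i x = 0 := by
        rw [hatLI, harg i]
        apply hat_zero
        rcases hkm with hkm | hkm
        · rw [le_abs]
          left
          have : (i:ℝ) ≤ 2*m - 1 := by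
            rw [hk']
            push_cast
            have : (k:ℝ) + 1 ≤ m := by exact_mod_cast hkm
            linarith
          linarith
        · rw [le_abs]
          right
          have : (2:ℝ)*m + 3 ≤ i := by
            rw [hk']
            push_cast
            have : (m:ℝ) + 1 ≤ k := by exact_mod_cast hkm
            linarith
          linarith
      rw [hz, mul_zero]
    -- main term
    rcases lt_or_ge (x*2^(l+1)) (2*m+1) with hcase | hcase
    all_goals rw [show ((2:ℝ)^(l+1)) = 2^l*2 from by ring] at hcase
    · have hfl2 : ⌊x * (2:ℝ)^(l+1)⌋ = (2*m : ℤ) := by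
        refine Int.floor_eq_iff.mpr ⟨?_, ?_⟩ <;>
          rw [show ((2:ℝ)^(l+1)) = 2^l*2 from by ring] <;> push_cast <;> linarith
      have hhat : hatLI (l+1) (2*m+1) x = x*2^l*2 - 2*m := by
        rw [hatLI, harg]
        push_cast
        rw [hat_val, abs_of_nonpos (by push_cast; linarith)]
        · push_cast; ring
        · rw [abs_of_nonpos (by push_cast; linarith)]
          push_cast; linarith
      rw [hhat]
      simp only [interp, hierCoeff, hfl, hfl2, hneg]
      push_cast
      ring
    · have hfl2 : ⌊x * (2:ℝ)^(l+1)⌋ = (2*m+1 : ℤ) := by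
        refine Int.floor_eq_iff.mpr ⟨?_, ?_⟩ <;>
          rw [show ((2:ℝ)^(l+1)) = 2^l*2 from by ring] <;> push_cast <;> linarith
      have hhat : hatLI (l+1) (2*m+1) x = 2*m + 2 - x*2^l*2 := by
        rw [hatLI, harg]
        push_cast
        rw [hat_val, abs_of_nonneg (by push_cast; linarith)]
        · push_cast; ring
        · rw [abs_of_nonneg (by push_cast; linarith)]
          push_cast; linarith
      rw [hhat]
      simp only [interp, hierCoeff, hfl, hfl2, hneg]
      push_cast
      ring

lemma interp_sum (f : ℝ → ℝ) (hf0 : f 0 = 0) (hf1 : f 1 = 0) (n : ℕ) (x : ℝ)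
    (hx0 : 0 ≤ x) (hx1 : x ≤ 1) :
    interp f n x = ∑ l ∈ Finset.Icc 1 n,
      ∑ i ∈ (Finset.Icc 1 (2 ^ l - 1)).filter (fun i => Odd i),
        hierCoeff f l i * hatLI l i x := by
  induction n with
  | zero => simpa using interp_zero f hf0 hf1 x hx0 hx1
  | succ n ih =>
    rw [Finset.sum_Icc_succ_top (by omega), ← ih]
    have := step f n x hx0 hx1
    linarith

lemma sq_zpow (n : ℕ) : ((2:ℝ)^(-(n:ℤ)))^2 = (4:ℝ)^(-(n:ℤ)) := by
  rw [show (4:ℝ) = (2:ℝ)^(2:ℤ) by norm_num, ← zpow_mul, ← zpow_natCast ((2:ℝ)^(-(n:ℤ))) 2,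
    ← zpow_mul]
  norm_num
  ring_nf


lemma interp_err (f : ℝ → ℝ) (hf : ContDiffOn ℝ 2 f (Set.Icc 0 1)) (C : ℝ)
    (hC : ∀ x ∈ Set.Icc (0:ℝ) 1, |deriv (deriv f) x| ≤ C)
    (a b x : ℝ) (ha : 0 ≤ a) (hb : b ≤ 1) (hax : a < x) (hxb : x < b) :
    |f x - (f a + (x - a)/(b-a) * (f b - f a))| ≤ C / 2 * ((x - a) * (b - x)) := by
  have hab : a < b := hax.trans hxb
  have hba : b - a ≠ 0 := sub_ne_zero.mpr hab.ne'
  have hsub : Set.Icc a b ⊆ Set.Icc (0:ℝ) 1 := Set.Icc_subset_Icc ha hb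
  have hoo : Set.Ioo a b ⊆ Set.Ioo (0:ℝ) 1 := fun t ht =>
    ⟨lt_of_le_of_lt ha ht.1, lt_of_lt_of_le ht.2 hb⟩
  set s : ℝ := (f b - f a) / (b - a) with hs
  set e : ℝ → ℝ := fun t => f t - (f a + (t - a) / (b - a) * (f b - f a)) with he
  set D : ℝ := (x - a) * (x - b) with hD
  set g : ℝ → ℝ := fun t => e t * D - e x * ((t - a) * (t - b)) with hg
  have hea : e a = 0 := by simp [he]
  have heb : e b = 0 := by simp only [he]; field_simp; ring
  have hga : g a = 0 := by simp [hg, hea]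
  have hgb : g b = 0 := by simp [hg, heb]
  have hgx : g x = 0 := by simp only [hg, hD]; ring
  have hdf : ∀ t ∈ Set.Ioo (0:ℝ) 1, HasDerivAt f (deriv f t) t := by
    intro t ht
    exact (((hf.mono Set.Ioo_subset_Icc_self).contDiffAt
      (isOpen_Ioo.mem_nhds ht)).differentiableAt (by norm_num)).hasDerivAt
  have hdf1 : ContDiffOn ℝ 1 (deriv f) (Set.Ioo 0 1) := by
    have := (contDiffOn_succ_iff_deriv_of_isOpen (n := 1) isOpen_Ioo).mp
      (by exact_mod_cast (hf.mono Set.Ioo_subset_Icc_self))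
    exact this.2.2
  have hdf2 : ∀ t ∈ Set.Ioo (0:ℝ) 1, HasDerivAt (deriv f) (deriv (deriv f) t) t := by
    intro t ht
    exact ((hdf1.contDiffAt (isOpen_Ioo.mem_nhds ht)).differentiableAt (by norm_num)).hasDerivAt
  set g' : ℝ → ℝ := fun t => (deriv f t - s) * D - e x * (2*t - a - b) with hg'
  have hgderiv : ∀ t ∈ Set.Ioo a b, HasDerivAt g (g' t) t := by
    intro t ht
    have h1 : HasDerivAt e (deriv f t - s) t := by
      have hlin : HasDerivAt (fun u => f a + (u - a)/(b-a)*(f b - f a)) s t := by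
        have h := ((((hasDerivAt_id t).sub_const a).div_const (b-a)).mul_const
          (f b - f a)).const_add (f a)
        exact h.congr_deriv (by rw [hs]; ring)
      exact (hdf t (hoo ht)).sub hlin
    have hq : HasDerivAt (fun u : ℝ => (u-a)*(u-b)) (2*t - a - b) t := by
      have h := ((hasDerivAt_id t).sub_const a).mul ((hasDerivAt_id t).sub_const b)
      simp only [id_eq, one_mul, mul_one] at h
      exact h.congr_deriv (by ring)
    exact (h1.mul_const D).sub (hq.const_mul (e x))
  have hgcont : ContinuousOn g (Set.Icc a b) := by
    have hfc : ContinuousOn f (Set.Icc a b) := (hf.continuousOn).mono hsub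
    apply ContinuousOn.sub
    · exact (hfc.sub (by fun_prop)).mul continuousOn_const
    · fun_prop
  obtain ⟨c1, hc1, hgc1⟩ : ∃ c ∈ Set.Ioo a x, g' c = 0 :=
    exists_hasDerivAt_eq_zero hax (hgcont.mono (Set.Icc_subset_Icc le_rfl hxb.le))
      (hga.trans hgx.symm) (fun t ht => hgderiv t ⟨ht.1, ht.2.trans hxb⟩)
  obtain ⟨c2, hc2, hgc2⟩ : ∃ c ∈ Set.Ioo x b, g' c = 0 :=
    exists_hasDerivAt_eq_zero hxb (hgcont.mono (Set.Icc_subset_Icc hax.le le_rfl))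
      (hgx.trans hgb.symm) (fun t ht => hgderiv t ⟨hax.trans ht.1, ht.2⟩)
  have hc12 : c1 < c2 := hc1.2.trans hc2.1
  have hsubc : Set.Icc c1 c2 ⊆ Set.Ioo a b :=
    fun t ht => ⟨lt_of_lt_of_le hc1.1 ht.1, lt_of_le_of_lt ht.2 hc2.2⟩
  have hg'cont : ContinuousOn g' (Set.Icc c1 c2) := by
    apply ContinuousOn.sub
    · apply ContinuousOn.mul _ continuousOn_const
      apply ContinuousOn.sub _ continuousOn_const
      intro t ht
      exact ((hdf1.contDiffAt (isOpen_Ioo.mem_nhds (hoo (hsubc ht)))).continuousAt).continuousWithinAt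
    · fun_prop
  have hg'deriv : ∀ t ∈ Set.Ioo c1 c2, HasDerivAt g' (deriv (deriv f) t * D - e x * 2) t := by
    intro t ht
    have h1 : HasDerivAt (fun t => (deriv f t - s) * D) (deriv (deriv f) t * D) t :=
      ((hdf2 t (hoo (hsubc (Set.Ioo_subset_Icc_self ht)))).sub_const s).mul_const D
    have h2 : HasDerivAt (fun u : ℝ => e x * (2*u - a - b)) (e x * 2) t := by
      have h := ((((hasDerivAt_id t).const_mul 2).sub_const a).sub_const b).const_mul (e x)
      simp only [id_eq, mul_one] at h
      exact h
    exact h1.sub h2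
  obtain ⟨ξ, hξ, hξ0⟩ := exists_hasDerivAt_eq_zero hc12 hg'cont (hgc1.trans hgc2.symm) hg'deriv
  clear_value s e D g g'
  have hξ01 : ξ ∈ Set.Icc (0:ℝ) 1 :=
    Set.Ioo_subset_Icc_self (hoo (hsubc (Set.Ioo_subset_Icc_self hξ)))
  have key : deriv (deriv f) ξ * D = 2 * e x := by linarith [hξ0]
  have hDneg : D < 0 := by
    rw [hD]; exact mul_neg_of_pos_of_neg (by linarith) (by linarith)
  have habs : |e x| = |deriv (deriv f) ξ| * |D| / 2 := by
    have : e x = deriv (deriv f) ξ * D / 2 := by linarith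
    rw [this, abs_div, abs_mul]
    norm_num
  have hDabs : |D| = (x - a) * (b - x) := by
    rw [abs_of_neg hDneg, hD]; ring
  have h1 : 0 ≤ (x - a) * (b - x) := mul_nonneg (by linarith) (by linarith)
  have hgoal : f x - (f a + (x - a)/(b-a) * (f b - f a)) = e x := by rw [he]
  rw [hgoal]
  calc |e x| = |deriv (deriv f) ξ| * ((x-a)*(b-x)) / 2 := by rw [habs, hDabs]
    _ ≤ C * ((x-a)*(b-x)) / 2 := by
        gcongr
        exact hC ξ hξ01
    _ = C / 2 * ((x-a)*(b-x)) := by ring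

lemma interp_err_all (f : ℝ → ℝ) (hf : ContDiffOn ℝ 2 f (Set.Icc 0 1)) (C : ℝ)
    (hC : ∀ x ∈ Set.Icc (0:ℝ) 1, |deriv (deriv f) x| ≤ C) (n : ℕ) (x : ℝ)
    (hx0 : 0 ≤ x) (hx1 : x ≤ 1) :
    |f x - interp f n x| ≤ 1/6 * (4:ℝ)^(-(n:ℤ)) * C := by
  have hC0 : 0 ≤ C := le_trans (abs_nonneg _) (hC 0 ⟨le_rfl, by norm_num⟩)
  have hbpos : (0:ℝ) ≤ 1/6 * (4:ℝ)^(-(n:ℤ)) * C := by positivity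
  have hpl : (0:ℝ) < 2^n := by positivity
  have hh : (0:ℝ) < (2:ℝ)^(-(n:ℤ)) := by positivity
  have hph : (2:ℝ)^(n:ℕ) * (2:ℝ)^(-(n:ℤ)) = 1 := by
    rw [zpow_neg, zpow_natCast]; field_simp
  rcases eq_or_lt_of_le hx1 with rfl | hx1
  · rw [interp_one, sub_self, abs_zero]; exact hbpos
  · set m : ℕ := ⌊x * 2^n⌋.toNat with hm
    have hfl : ⌊x * (2:ℝ)^n⌋ = (m:ℤ) :=
      (Int.toNat_of_nonneg (Int.floor_nonneg.mpr (mul_nonneg hx0 (by positivity)))).symm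
    have hm1 : (m:ℝ) ≤ x*2^n := by
      have := Int.floor_le (x * (2:ℝ)^n); rw [hfl] at this; exact_mod_cast this
    have hm2 : x*2^n < m+1 := by
      have := Int.lt_floor_add_one (x * (2:ℝ)^n); rw [hfl] at this; exact_mod_cast this
    have hmp : m < 2^n := by
      have : (m:ℝ) < 2^n := lt_of_le_of_lt hm1 (by nlinarith)
      exact_mod_cast this
    have hmp' : (m:ℝ) + 1 ≤ 2^n := by exact_mod_cast Nat.succ_le_of_lt hmp
    have hiv : interp f n x
        = f ((m:ℝ) * (2:ℝ)^(-(n:ℤ)))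
          + (x*2^n - m) * (f (((m:ℝ)+1) * (2:ℝ)^(-(n:ℤ))) - f ((m:ℝ) * (2:ℝ)^(-(n:ℤ)))) := by
      rw [interp, hfl]; push_cast; ring_nf
    rcases eq_or_lt_of_le hm1 with heq | hlt
    · -- x is a grid point
      have hxa : x = (m:ℝ) * (2:ℝ)^(-(n:ℤ)) := by
        have : x * (2^n * (2:ℝ)^(-(n:ℤ))) = (m:ℝ) * (2:ℝ)^(-(n:ℤ)) := by
          rw [← mul_assoc, ← heq]
        rwa [hph, mul_one] at this
      rw [hiv, ← heq, ← hxa]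
      simp only [sub_self, zero_mul, add_zero, abs_zero]
      exact hbpos
    · set a : ℝ := (m:ℝ) * (2:ℝ)^(-(n:ℤ)) with ha
      set b : ℝ := ((m:ℝ)+1) * (2:ℝ)^(-(n:ℤ)) with hb
      have ha0 : 0 ≤ a := by positivity
      have hb1 : b ≤ 1 := by
        rw [hb]
        calc ((m:ℝ)+1) * (2:ℝ)^(-(n:ℤ)) ≤ 2^n * (2:ℝ)^(-(n:ℤ)) := by
              apply mul_le_mul_of_nonneg_right hmp' hh.le
          _ = 1 := hph
      have hax : a < x := by
        rw [ha]
        have h2 : (m:ℝ) * (2:ℝ)^(-(n:ℤ)) < (x * 2^n) * (2:ℝ)^(-(n:ℤ)) :=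
          mul_lt_mul_of_pos_right hlt hh
      -- x * 2^n * 2^{-n} = x
        rwa [mul_assoc, hph, mul_one] at h2
      have hxb : x < b := by
        rw [hb]
        have h2 : (x * 2^n) * (2:ℝ)^(-(n:ℤ)) < ((m:ℝ)+1) * (2:ℝ)^(-(n:ℤ)) :=
          mul_lt_mul_of_pos_right hm2 hh
        rwa [mul_assoc, hph, mul_one] at h2
      have hba : b - a = (2:ℝ)^(-(n:ℤ)) := by rw [ha, hb]; ring
      have herr := interp_err f hf C hC a b x ha0 hb1 hax hxb
      have hiv2 : interp f n x = f a + (x - a)/(b-a) * (f b - f a) := by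
        rw [hiv, hba, ha, hb]
        have : (x - (m:ℝ) * (2:ℝ)^(-(n:ℤ)))/((2:ℝ)^(-(n:ℤ))) = x*2^n - m := by
          rw [div_eq_iff hh.ne']
          nlinarith [hph]
        rw [this]
      rw [hiv2]
      calc |f x - (f a + (x - a)/(b-a) * (f b - f a))| ≤ C/2 * ((x-a)*(b-x)) := herr
        _ ≤ C/2 * ((2:ℝ)^(-(n:ℤ)))^2/4 := by
            have hq : (x-a)*(b-x) ≤ ((2:ℝ)^(-(n:ℤ)))^2/4 := by nlinarith [hba, sq_nonneg ((x-a)-(b-x))]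
            calc C/2 * ((x-a)*(b-x)) ≤ C/2 * (((2:ℝ)^(-(n:ℤ)))^2/4) :=
                  mul_le_mul_of_nonneg_left hq (by positivity)
              _ = C/2 * ((2:ℝ)^(-(n:ℤ)))^2/4 := by ring
        _ ≤ 1/6 * (4:ℝ)^(-(n:ℤ)) * C := by
            rw [sq_zpow]
            nlinarith [zpow_pos (show (0:ℝ) < 4 by norm_num) (-(n:ℤ))]

lemma tsum_val (n : ℕ) :
    (∑' m : ℕ, 2⁻¹ * (2 : ℝ) ^ (-(2 * ((n : ℤ) + 1 + (m : ℤ)))))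
      = 1 / 6 * (4 : ℝ) ^ (-(n : ℤ)) := by
  have hterm : ∀ m : ℕ, 2⁻¹ * (2:ℝ)^(-(2 * ((n:ℤ) + 1 + (m:ℤ))))
      = (2⁻¹ * ((4:ℝ)^(-(n:ℤ)-1))) * (4⁻¹:ℝ)^m := by
    intro m
    have h1 : (2:ℝ)^(-(2*((n:ℤ)+1+(m:ℤ)))) = (4:ℝ)^(-(n:ℤ)-1) * ((4:ℝ))^(-(m:ℤ)) := by
      rw [show (4:ℝ) = (2:ℝ)^(2:ℤ) from by norm_num, ← zpow_mul, ← zpow_mul,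
        ← zpow_add₀ (two_ne_zero)]
      congr 1
      ring
    have h2 : (4:ℝ)^(-(m:ℤ)) = (4⁻¹:ℝ)^m := by
      rw [zpow_neg, zpow_natCast, inv_pow]
    rw [h1, h2]
    ring
  simp only [hterm]
  rw [tsum_mul_left, tsum_geometric_of_lt_one (by norm_num) (by norm_num)]
  have h3 : (4:ℝ)^(-(n:ℤ)-1) = (4:ℝ)^(-(n:ℤ))/4 := by
    rw [zpow_sub_one₀ (by norm_num)]
    ring
  rw [h3]
  norm_num
  ring

/-- Error bound for the one-dimensional hierarchical interpolant of level `n`: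
`‖f - f_n‖_∞ ≤ ∑_{l>n} 2^{-1} 2^{-2l} ‖f''‖_∞ ≤ (1/6)·4^{-n}·‖f''‖_∞`. -/
theorem hierarchical_interpolant_error (f : ℝ → ℝ)
    (hf : ContDiffOn ℝ 2 f (Set.Icc 0 1)) (hf0 : f 0 = 0) (hf1 : f 1 = 0)
    (C : ℝ) (hC : ∀ x ∈ Set.Icc (0 : ℝ) 1, |deriv (deriv f) x| ≤ C)
    (n : ℕ) (hn : 1 ≤ n) :
    (∀ x ∈ Set.Icc (0 : ℝ) 1,
      |f x - ∑ l ∈ Finset.Icc 1 n,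
          ∑ i ∈ (Finset.Icc 1 (2 ^ l - 1)).filter (fun i => Odd i),
            hierCoeff f l i * hatLI l i x|
        ≤ (∑' m : ℕ, 2⁻¹ * (2 : ℝ) ^ (-(2 * ((n : ℤ) + 1 + (m : ℤ))))) * C) ∧
    (∑' m : ℕ, 2⁻¹ * (2 : ℝ) ^ (-(2 * ((n : ℤ) + 1 + (m : ℤ))))) * C
      ≤ 1 / 6 * (4 : ℝ) ^ (-(n : ℤ)) * C := by
  have ht := tsum_val n
  constructor
  · intro x hx
    rw [ht, ← interp_sum f hf0 hf1 n x hx.1 hx.2]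
    exact interp_err_all f hf C hC n x hx.1 hx.2
  · rw [ht]
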